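/- Let d ≥ 1, let y₀ ∈ S^d, and 0 < ρ ≤ π/2. Define f_ρ(x) = Φ(g_ρ(y₀·x)) where g_ρ is the affine bijection from [cos ρ, cos(ρ/2)] onto [−1,1] and Φ is the smooth bump function supported on [−1,1] given by Φ(t) = exp(1 − 1/(1−t²)) for |t| < 1 and 0 otherwise. Then there is a constant c_d > 0 depending only on d such that ∫_{S^d} f_ρ dσ_d ≥ c_d ρ^d, where σ_d is the normalized surface measure on S^d. -/

import Mathlib

open MeasureTheory Real
open scoped RealInnerProductSpace

noncomputable section

/-- Euclidean space `ℝ^{d+1}`. -/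
abbrev Esp (d : ℕ) := EuclideanSpace ℝ (Fin (d+1))

/-- The unit sphere `S^d ⊂ ℝ^{d+1}`. -/
def usphere (d : ℕ) : Set (Esp d) := Metric.sphere (0 : Esp d) 1

/-- The normalized surface area measure `σ_d` on `S^d` (normalized `d`-dimensional
Hausdorff measure restricted to the sphere). -/
def sigmaSph (d : ℕ) : Measure (Esp d) :=
  (μH[d] (usphere d))⁻¹ • (μH[d]).restrict (usphere d)

/-- The covering radius `ρ(X) = max_{x ∈ S^d} min_{y ∈ X} arccos(x·y)`. -/
def covRadius (d : ℕ) (X : Finset (Esp d)) : ℝ :=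
  ⨆ x : usphere d, ⨅ y : X, Real.arccos ⟪(x : Esp d), (y : Esp d)⟫

/-- The smooth bump function `Φ`. -/
def bump (t : ℝ) : ℝ :=
  if -1 < t ∧ t < 1 then Real.exp (1 - 1 / (1 - t ^ 2)) else 0

/-- The affine bijection from `[cos ρ, cos(ρ/2)]` onto `[-1, 1]`. -/
def gAff (ρ t : ℝ) : ℝ :=
  (2 * t - (Real.cos ρ + Real.cos (ρ / 2))) / (Real.cos (ρ / 2) - Real.cos ρ)

section AuxiliaryLemmas

open scoped ENNReal NNReal

lemma bump_nonneg (t : ℝ) : 0 ≤ bump t := by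
  unfold bump; split
  · exact (Real.exp_pos _).le
  · exact le_refl 0

lemma bump_le_one (t : ℝ) : bump t ≤ 1 := by
  unfold bump; split
  · rename_i h
    apply Real.exp_le_one_iff.mpr
    have h1 : 0 < 1 - t ^ 2 := by nlinarith [h.1, h.2]
    have : 1 ≤ 1 / (1 - t ^ 2) := by
      rw [le_div_iff₀ h1]; nlinarith
    linarith
  · norm_num

lemma bump_ge (t : ℝ) (ht : |t| ≤ 1/2) : Real.exp (-(1/3)) ≤ bump t := by
  obtain ⟨ha, hb⟩ := abs_le.mp ht
  have h1 : -1 < t := by linarith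
  have h2 : t < 1 := by linarith
  have ht2 : t ^ 2 ≤ 1/4 := by nlinarith
  unfold bump
  rw [if_pos ⟨h1, h2⟩]
  apply Real.exp_le_exp.mpr
  have h4 : (0:ℝ) < 1 - t ^ 2 := by linarith
  have : 1 / (1 - t ^ 2) ≤ 4/3 := by
    rw [div_le_iff₀ h4]; linarith
  linarith

lemma measurable_bump : Measurable bump := by
  have : bump = (Set.Ioo (-1 : ℝ) 1).indicator (fun t => Real.exp (1 - 1 / (1 - t ^ 2))) := by
    funext t
    simp only [bump, Set.indicator_apply, Set.mem_Ioo]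
  rw [this]
  exact Measurable.indicator (by fun_prop) measurableSet_Ioo

/-- purely algebraic version of the band width estimate -/
lemma band_width_aux {cρ ch ρ : ℝ} (h0 : 0 < ρ)
    (hcρ0 : 0 ≤ cρ) (hle : cρ ≤ ch) (hch1 : ch < 1)
    (hsum : 1/2 ≤ cρ + ch) (hΔ : 3/(2*π^2) * ρ^2 ≤ ch - cρ)
    (hsin : Real.sqrt (1 - cρ^2) ≤ ρ) :
    3/(16*π^2) * ρ ≤ Real.sqrt (1 - ((3*cρ + ch)/4)^2)
      - Real.sqrt (1 - ((cρ + 3*ch)/4)^2) := by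
  have hπ : 0 < π := Real.pi_pos
  set a := (3*cρ + ch)/4 with ha
  set b := (cρ + 3*ch)/4 with hb
  have hch0 : 0 ≤ ch := le_trans hcρ0 hle
  have ha0 : 0 ≤ a := by positivity
  have hab : a ≤ b := by rw [ha, hb]; linarith
  have hb1 : b ≤ 1 := by rw [hb]; linarith
  have ha1 : a < 1 := by rw [ha]; linarith
  set s1 := Real.sqrt (1 - b^2) with hs1
  set s2 := Real.sqrt (1 - a^2) with hs2
  have hb2 : b^2 ≤ 1 := by nlinarith
  have ha2 : a^2 < 1 := by nlinarith
  have hs1sq : s1^2 = 1 - b^2 := Real.sq_sqrt (by linarith)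
  have hs2sq : s2^2 = 1 - a^2 := Real.sq_sqrt (by linarith)
  have hs10 : 0 ≤ s1 := Real.sqrt_nonneg _
  have hs20 : 0 < s2 := Real.sqrt_pos.mpr (by linarith)
  have hs12 : s1 ≤ s2 := Real.sqrt_le_sqrt (by nlinarith)
  have hacρ : cρ ≤ a := by rw [ha]; linarith
  have hs2sin : s2 ≤ Real.sqrt (1 - cρ^2) := Real.sqrt_le_sqrt (by nlinarith)
  have hsum2 : s1 + s2 ≤ 2 * ρ := by
    have h1 : s2 ≤ ρ := le_trans hs2sin hsin
    linarith
  -- clear denominators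
  have hΔ0 : 0 ≤ ch - cρ := by linarith
  have hΔ' : 3*ρ^2 ≤ (ch - cρ)*(2*π^2) := by
    rw [div_mul_eq_mul_div, div_le_iff₀ (by positivity)] at hΔ
    linarith
  have hexp : (s2 - s1) * (s2 + s1) = (b - a) * (b + a) := by
    linear_combination hs2sq - hs1sq
  have hba : b - a = (ch - cρ)/2 := by rw [ha, hb]; ring
  have hba2 : 1/2 ≤ b + a := by rw [hb, ha]; linarith
  have h5 : 3*ρ^2 ≤ (ch - cρ)*(b+a)*(4*π^2) := by
    have h51 := mul_le_mul_of_nonneg_right hba2 (le_of_lt (by positivity : (0:ℝ) < 4*π^2))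
    have h52 := mul_le_mul_of_nonneg_left h51 hΔ0
    have hr : (ch - cρ)*(1/2*(4*π^2)) = (ch - cρ)*(2*π^2) := by ring
    rw [hr] at h52
    linarith
  have h6 : 3*ρ^2 ≤ (s2 - s1)*(s2 + s1)*(8*π^2) := by
    have : (s2 - s1)*(s2 + s1)*(8*π^2) = (ch - cρ)*(b+a)*(4*π^2) := by
      rw [hexp, hba]; ring
    linarith
  have h7 : (s2 - s1)*(s2 + s1)*(8*π^2) ≤ (s2 - s1)*(16*π^2)*ρ := by
    have hnn : (0:ℝ) ≤ (s2 - s1)*(8*π^2) := mul_nonneg (by linarith) (by positivity)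
    have h71 := mul_le_mul_of_nonneg_left hsum2 hnn
    have e1 : (s2-s1)*(8*π^2)*(s1+s2) = (s2-s1)*(s2+s1)*(8*π^2) := by ring
    have e2 : (s2-s1)*(8*π^2)*(2*ρ) = (s2-s1)*(16*π^2)*ρ := by ring
    linarith
  rw [div_mul_eq_mul_div, div_le_iff₀ (by positivity)]
  have h8 : 3*ρ*ρ ≤ (s2 - s1)*(16*π^2)*ρ := by
    have e3 : 3*ρ*ρ = 3*ρ^2 := by ring
    linarith
  exact le_of_mul_le_mul_right h8 h0

/-- Quantitative width of the band. -/
lemma band_width {ρ : ℝ} (h0 : 0 < ρ) (h2 : ρ ≤ π/2) :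
    3/(16*π^2) * ρ ≤ Real.sqrt (1 - ((3*Real.cos ρ + Real.cos (ρ/2))/4)^2)
      - Real.sqrt (1 - ((Real.cos ρ + 3*Real.cos (ρ/2))/4)^2) := by
  have hπ : 0 < π := Real.pi_pos
  apply band_width_aux h0
  · exact Real.cos_nonneg_of_mem_Icc ⟨by linarith, h2⟩
  · exact Real.cos_le_cos_of_nonneg_of_le_pi (by linarith) (by linarith) (by linarith)
  · have := Real.cos_lt_cos_of_nonneg_of_le_pi (le_refl (0:ℝ)) (by linarith)
      (by linarith : (0:ℝ) < ρ/2)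
    simpa using this
  · have hch4 : Real.cos (π/4) ≤ Real.cos (ρ/2) :=
      Real.cos_le_cos_of_nonneg_of_le_pi (by linarith) (by linarith) (by linarith)
    rw [Real.cos_pi_div_four] at hch4
    have h2' : (1:ℝ) ≤ Real.sqrt 2 := by
      nlinarith [Real.sq_sqrt (by norm_num : (0:ℝ) ≤ 2), Real.sqrt_nonneg 2]
    have := Real.cos_nonneg_of_mem_Icc (x := ρ) ⟨by linarith, h2⟩
    nlinarith
  · -- Δ lower bound
    have hcc : Real.cos (ρ/2) - Real.cos ρ = 2 * Real.sin (3*ρ/4) * Real.sin (ρ/4) := by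
      have := Real.cos_sub_cos (ρ/2) ρ
      rw [show (ρ/2 + ρ)/2 = 3*ρ/4 by ring, show (ρ/2 - ρ)/2 = -(ρ/4) by ring,
        Real.sin_neg] at this
      linarith
    have hs3 : 2/π * (3*ρ/4) ≤ Real.sin (3*ρ/4) := Real.mul_le_sin (by linarith) (by linarith)
    have hs4 : 2/π * (ρ/4) ≤ Real.sin (ρ/4) := Real.mul_le_sin (by linarith) (by linarith)
    have h34 : 0 ≤ 2/π * (3*ρ/4) := by positivity
    have h14 : 0 ≤ 2/π * (ρ/4) := by positivity
    have hmul := mul_le_mul hs3 hs4 h14 (le_trans h34 hs3)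
    have hππ : 2/π * (3*ρ/4) * (2/π * (ρ/4)) = 3/(4*π^2) * ρ^2 := by
      field_simp; ring
    have h2e : 3/(2*π^2) * ρ^2 = 2 * (3/(4*π^2) * ρ^2) := by ring
    rw [hcc, h2e]
    rw [hππ] at hmul
    linarith
  · -- sin ρ ≤ ρ
    have hsin2 : Real.sqrt (1 - Real.cos ρ^2) = Real.sin ρ := by
      rw [show 1 - Real.cos ρ^2 = Real.sin ρ^2 by nlinarith [Real.sin_sq_add_cos_sq ρ]]
      exact Real.sqrt_sq (Real.sin_nonneg_of_nonneg_of_le_pi h0.le (by linarith))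
    rw [hsin2]
    exact Real.sin_le h0.le

lemma exists_isometry_perp (d : ℕ) (y₀ : Esp d) (hy : ‖y₀‖ = 1) :
    ∃ φ : EuclideanSpace ℝ (Fin d) →ₗᵢ[ℝ] Esp d,
      (∀ u, ⟪y₀, φ u⟫ = 0) ∧ ∀ v : Esp d, ⟪y₀, v⟫ = 0 → ∃ u, φ u = v := by
  have hy0 : y₀ ≠ 0 := by intro h; rw [h, norm_zero] at hy; norm_num at hy
  have hfinK : Module.finrank ℝ ((ℝ ∙ y₀)ᗮ : Submodule ℝ (Esp d)) = d := by
    have h1 := Submodule.finrank_add_finrank_orthogonal (K := (ℝ ∙ y₀ : Submodule ℝ (Esp d)))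
    rw [finrank_span_singleton hy0, finrank_euclideanSpace_fin] at h1
    omega
  let B : OrthonormalBasis (Fin d) ℝ ((ℝ ∙ y₀)ᗮ : Submodule ℝ (Esp d)) :=
    (stdOrthonormalBasis ℝ _).reindex (finCongr hfinK)
  refine ⟨((ℝ ∙ y₀)ᗮ : Submodule ℝ (Esp d)).subtypeₗᵢ.comp B.repr.symm.toLinearIsometry,
    fun u => ?_, fun v hv => ?_⟩
  · exact Submodule.mem_orthogonal_singleton_iff_inner_right.mp (B.repr.symm u).2
  · exact ⟨B.repr ⟨v, Submodule.mem_orthogonal_singleton_iff_inner_right.mpr hv⟩, by simp⟩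

lemma proj_lipschitz (d : ℕ) (y₀ : Esp d) (hy : ‖y₀‖ = 1) :
    LipschitzWith 1 (fun x : Esp d => x - ⟪y₀, x⟫ • y₀) := by
  have key : ∀ v : Esp d, ‖v - ⟪y₀, v⟫ • y₀‖ ≤ ‖v‖ := by
    intro v
    have h2 : ‖v - ⟪y₀, v⟫ • y₀‖^2 = ‖v‖^2 - ⟪y₀, v⟫^2 := by
      rw [norm_sub_sq_real, real_inner_smul_right, norm_smul, hy, real_inner_comm]
      simp [abs_sq]
      ring
    nlinarith [norm_nonneg (v - ⟪y₀, v⟫ • y₀), norm_nonneg v, sq_nonneg ⟪y₀, v⟫]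
  apply LipschitzWith.of_dist_le_mul
  intro x y
  simp only [NNReal.coe_one, one_mul, dist_eq_norm]
  have hxy : (x - ⟪y₀, x⟫ • y₀) - (y - ⟪y₀, y⟫ • y₀) = (x - y) - ⟪y₀, x - y⟫ • y₀ := by
    rw [inner_sub_right, sub_smul]; abel
  rw [hxy]
  exact key _

set_option maxHeartbeats 1000000 in
lemma band_measure_lb (d : ℕ) (hd : 1 ≤ d) (y₀ : Esp d) (hy : ‖y₀‖ = 1)
    {a b : ℝ} (ha : 0 ≤ a) (hab : a ≤ b) (hb : b ≤ 1)
    (hlt : Real.sqrt (1 - b^2) < Real.sqrt (1 - a^2)) :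
    ENNReal.ofReal (((Real.sqrt (1 - a^2) - Real.sqrt (1 - b^2)) / Real.sqrt d) ^ d)
      ≤ μH[(d:ℝ)] ({x : Esp d | a ≤ ⟪y₀, x⟫ ∧ ⟪y₀, x⟫ ≤ b} ∩ usphere d) := by
  have hd0 : (0:ℝ) ≤ (d:ℝ) := by positivity
  have hb0 : 0 ≤ b := le_trans ha hab
  have hb2 : b^2 ≤ 1 := by nlinarith
  have ha2 : a^2 ≤ 1 := by nlinarith
  obtain ⟨φ, hφo, hφs⟩ := exists_isometry_perp d y₀ hy
  set s1 := Real.sqrt (1 - b^2) with hs1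
  set s2 := Real.sqrt (1 - a^2) with hs2
  have hs1sq : s1^2 = 1 - b^2 := Real.sq_sqrt (by linarith)
  have hs2sq : s2^2 = 1 - a^2 := Real.sq_sqrt (by linarith)
  have hs10 : 0 ≤ s1 := Real.sqrt_nonneg _
  have hs21 : s2 ≤ 1 := Real.sqrt_le_one.mpr (by linarith [sq_nonneg a])
  set P : Esp d → Esp d := fun x => x - ⟪y₀, x⟫ • y₀ with hPdef
  have hP : LipschitzWith 1 P := proj_lipschitz d y₀ hy
  set Ann : Set (EuclideanSpace ℝ (Fin d)) := {u | s1 ≤ ‖u‖ ∧ ‖u‖ ≤ s2} with hAnn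
  set Band : Set (Esp d) := {x : Esp d | a ≤ ⟪y₀, x⟫ ∧ ⟪y₀, x⟫ ≤ b} with hBand
  -- image of the annulus under φ is contained in P '' (Band ∩ sphere)
  have hsub : φ '' Ann ⊆ P '' (Band ∩ usphere d) := by
    rintro _ ⟨u, ⟨hu1, hu2⟩, rfl⟩
    set s := ‖u‖ with hs
    have hs0 : 0 ≤ s := norm_nonneg u
    have hss2 : s^2 ≤ s2^2 := by nlinarith
    have hss1 : s1^2 ≤ s^2 := by nlinarith
    have hsle1 : s^2 ≤ 1 := by nlinarith
    set t := Real.sqrt (1 - s^2) with htdef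
    have ht2 : t^2 = 1 - s^2 := Real.sq_sqrt (by linarith)
    have hta : a ≤ t := by
      rw [htdef, show a = Real.sqrt (a^2) from (Real.sqrt_sq ha).symm]
      apply Real.sqrt_le_sqrt; linarith [hss2, hs2sq]
    have htb : t ≤ b := by
      rw [htdef, show b = Real.sqrt (b^2) from (Real.sqrt_sq hb0).symm]
      apply Real.sqrt_le_sqrt; linarith [hss1, hs1sq]
    have hinner : ⟪y₀, t • y₀ + φ u⟫ = t := by
      rw [inner_add_right, real_inner_smul_right, hφo, real_inner_self_eq_norm_sq, hy]
      ring
    have hnormx : ‖t • y₀ + φ u‖ = 1 := by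
      have hu2 : ‖u‖^2 = s^2 := by rw [hs]
      have hx2 : ‖t • y₀ + φ u‖^2 = 1 := by
        rw [norm_add_sq_real, real_inner_smul_left, hφo, norm_smul, hy, φ.norm_map,
          mul_one, Real.norm_eq_abs, sq_abs]
        linear_combination ht2 + hu2
      nlinarith [norm_nonneg (t • y₀ + φ u)]
    refine ⟨t • y₀ + φ u, ⟨?_, ?_⟩, ?_⟩
    · rw [hBand]; simp only [Set.mem_setOf_eq, hinner]; exact ⟨hta, htb⟩
    · exact mem_sphere_zero_iff_norm.mpr hnormx
    · show (t • y₀ + φ u) - ⟪y₀, (t • y₀ + φ u)⟫ • y₀ = φ u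
      rw [hinner]
      exact add_sub_cancel_left _ _
  -- the ball inside the annulus
  set r := (s2 - s1)/2 with hrdef
  have hr : 0 < r := by rw [hrdef]; linarith
  set c0 : EuclideanSpace ℝ (Fin d) :=
    ((s1 + s2)/2) • (EuclideanSpace.single (⟨0, hd⟩ : Fin d) (1:ℝ)) with hc0def
  have hc0 : ‖c0‖ = (s1 + s2)/2 := by
    rw [hc0def, norm_smul, EuclideanSpace.norm_single, norm_one, mul_one,
      Real.norm_eq_abs, abs_of_nonneg (by linarith)]
  have hballsub : Metric.ball c0 r ⊆ Ann := by
    intro x hx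
    rw [Metric.mem_ball, dist_eq_norm] at hx
    have h1 : |‖x‖ - ‖c0‖| ≤ ‖x - c0‖ := abs_norm_sub_norm_le x c0
    rw [hc0] at h1
    have h2 := abs_le.mp (le_of_lt (lt_of_le_of_lt h1 hx))
    have hr2 : r = (s2 - s1)/2 := hrdef
    exact ⟨by linarith [h2.1, h2.2], by linarith [h2.1, h2.2]⟩
  -- pi-space comparison
  have hdpos : (0:ℝ) < Real.sqrt d := Real.sqrt_pos.mpr (by exact_mod_cast Nat.lt_of_lt_of_le Nat.zero_lt_one hd)
  set e := WithLp.equiv 2 (Fin d → ℝ) with hedef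
  have hsub2 : Metric.ball (e c0) (r / Real.sqrt d) ⊆ e '' Metric.ball c0 r := by
    intro x hx
    rw [Metric.mem_ball] at hx
    refine ⟨e.symm x, ?_, e.apply_symm_apply x⟩
    have halip : AntilipschitzWith _ e := PiLp.antilipschitzWith_ofLp 2 (fun _ : Fin d => ℝ)
    have h1 := halip.le_mul_dist (e.symm x) c0
    have hK : (((Fintype.card (Fin d) : ℝ≥0) ^ (1/(2:ℝ≥0∞)).toReal : ℝ≥0) : ℝ)
        = Real.sqrt d := by
      have h2' : (1/(2:ℝ≥0∞)).toReal = (1/2 : ℝ) := by simp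
      rw [NNReal.coe_rpow, h2', Fintype.card_fin]
      rw [Real.sqrt_eq_rpow]
      norm_num
    rw [e.apply_symm_apply, hK] at h1
    rw [Metric.mem_ball]
    calc dist (e.symm x) c0 ≤ Real.sqrt d * dist x (e c0) := h1
      _ < Real.sqrt d * (r / Real.sqrt d) := by
          exact mul_lt_mul_of_pos_left hx hdpos
      _ = r := by field_simp
  have h_pi_eq : (μH[(d:ℝ)] : Measure (Fin d → ℝ)) = volume := by
    have h := hausdorffMeasure_pi_real (ι := Fin d)
    simpa [Fintype.card_fin] using h
  have hrd : 0 < r / Real.sqrt d := by positivity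
  calc ENNReal.ofReal (((s2 - s1) / Real.sqrt d) ^ d)
      = volume (Metric.ball (e c0) (r / Real.sqrt d)) := by
        rw [Real.volume_pi_ball _ hrd, Fintype.card_fin]
        congr 2
        rw [hrdef]; ring
    _ = (μH[(d:ℝ)] : Measure (Fin d → ℝ)) (Metric.ball (e c0) (r / Real.sqrt d)) := by
        rw [h_pi_eq]
    _ ≤ (μH[(d:ℝ)] : Measure (Fin d → ℝ)) (e '' Metric.ball c0 r) := measure_mono hsub2
    _ ≤ μH[(d:ℝ)] (Metric.ball c0 r) := by
        have := (show LipschitzWith 1 e from PiLp.lipschitzWith_ofLp 2 (fun _ : Fin d => ℝ)).hausdorffMeasure_image_le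
          hd0 (Metric.ball c0 r)
        simpa using this
    _ ≤ μH[(d:ℝ)] Ann := measure_mono hballsub
    _ = μH[(d:ℝ)] (φ '' Ann) := (φ.isometry.hausdorffMeasure_image (Or.inl hd0) _).symm
    _ ≤ μH[(d:ℝ)] (P '' (Band ∩ usphere d)) := measure_mono hsub
    _ ≤ μH[(d:ℝ)] (Band ∩ usphere d) := by
        have := hP.hausdorffMeasure_image_le hd0 (Band ∩ usphere d)
        simpa using this

set_option maxHeartbeats 1000000 in
lemma hausdorff_closedBall_lt_top (d : ℕ) :
    μH[(d:ℝ)] (Metric.closedBall (0:EuclideanSpace ℝ (Fin d)) 1) < ⊤ := by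
  have hd0 : (0:ℝ) ≤ (d:ℝ) := by positivity
  set e := WithLp.equiv 2 (Fin d → ℝ) with hedef
  have halip : AntilipschitzWith _ e := PiLp.antilipschitzWith_ofLp 2 (fun _ : Fin d => ℝ)
  have hesym : LipschitzWith _ e.symm := halip.to_rightInverse e.right_inv
  have himg : e '' Metric.closedBall 0 1 ⊆ Metric.closedBall (e 0) 1 := by
    rintro _ ⟨y, hy, rfl⟩
    rw [Metric.mem_closedBall]
    calc dist (e y) (e 0) ≤ 1 * dist y 0 :=
          (show LipschitzWith 1 e from PiLp.lipschitzWith_ofLp 2 (fun _ : Fin d => ℝ)).dist_le_mul y 0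
      _ ≤ 1 := by rw [one_mul]; exact Metric.mem_closedBall.mp hy
  have h_pi_eq : (μH[(d:ℝ)] : Measure (Fin d → ℝ)) = volume := by
    have h := hausdorffMeasure_pi_real (ι := Fin d)
    simpa [Fintype.card_fin] using h
  calc μH[(d:ℝ)] (Metric.closedBall (0:EuclideanSpace ℝ (Fin d)) 1)
      = μH[(d:ℝ)] (e.symm '' (e '' Metric.closedBall 0 1)) := by
        rw [Equiv.symm_image_image]
    _ ≤ (((Fintype.card (Fin d) : ℝ≥0) ^ (1/(2:ℝ≥0∞)).toReal : ℝ≥0) : ℝ≥0∞)^(d:ℝ) *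
          (μH[(d:ℝ)] : Measure (Fin d → ℝ)) (e '' Metric.closedBall 0 1) :=
        hesym.hausdorffMeasure_image_le hd0 _
    _ ≤ (((Fintype.card (Fin d) : ℝ≥0) ^ (1/(2:ℝ≥0∞)).toReal : ℝ≥0) : ℝ≥0∞)^(d:ℝ) *
          volume (Metric.closedBall (e 0) 1) := by
        rw [h_pi_eq]
        exact mul_le_mul_right (measure_mono himg) _
    _ < ⊤ := by
        rw [Real.volume_pi_closedBall _ zero_le_one]
        exact ENNReal.mul_lt_top
          (ENNReal.rpow_lt_top_of_nonneg hd0 ENNReal.coe_ne_top) ENNReal.ofReal_lt_top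

set_option maxHeartbeats 2000000 in
lemma sphere_hausdorff_lt_top (d : ℕ) (hd : 1 ≤ d) : μH[(d:ℝ)] (usphere d) < ⊤ := by
  have hd0 : (0:ℝ) ≤ (d:ℝ) := by positivity
  set N : Esp d := EuclideanSpace.single (0 : Fin (d+1)) (1:ℝ) with hNdef
  have hN : ‖N‖ = 1 := by rw [hNdef, EuclideanSpace.norm_single, norm_one]
  obtain ⟨φ, hφo, hφs⟩ := exists_isometry_perp d N hN
  set F : EuclideanSpace ℝ (Fin d) → Esp d :=
    fun u => (‖u‖^2+1)⁻¹ • ((2:ℝ) • φ u + (‖u‖^2 - 1) • N) with hFdef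
  set G : EuclideanSpace ℝ (Fin d) → Esp d :=
    fun u => (‖u‖^2+1)⁻¹ • ((2:ℝ) • φ u - (‖u‖^2 - 1) • N) with hGdef
  -- covering
  have hcover : usphere d ⊆ F '' Metric.closedBall 0 1 ∪ G '' Metric.closedBall 0 1 := by
    intro x hx
    have hx1 : ‖x‖ = 1 := mem_sphere_zero_iff_norm.mp hx
    set t := ⟪N, x⟫ with htdef
    have hts : |t| ≤ 1 := by
      have h := abs_real_inner_le_norm N x
      rw [hN, hx1] at h; simpa using h
    obtain ⟨hts1, hts2⟩ := abs_le.mp hts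
    set v := x - t • N with hvdef
    have hvN : ⟪N, v⟫ = 0 := by
      rw [hvdef, inner_sub_right, real_inner_smul_right, real_inner_self_eq_norm_sq, hN]
      ring
    have hxN : ⟪x, N⟫ = t := by rw [real_inner_comm]
    have hvnorm : ‖v‖^2 = 1 - t^2 := by
      rw [hvdef, norm_sub_sq_real, real_inner_smul_right, hxN, norm_smul, hN,
        Real.norm_eq_abs, mul_one, sq_abs, hx1]
      ring
    by_cases ht : t ≤ 0
    · left
      have h1t : 0 < 1 - t := by linarith
      obtain ⟨u, hu⟩ := hφs ((1 - t)⁻¹ • v)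
        (by rw [real_inner_smul_right, hvN]; ring)
      have hun : ‖u‖^2 = (1+t)/(1-t) := by
        have h1 : ‖φ u‖ = ‖u‖ := φ.norm_map u
        rw [hu] at h1
        have h2 : ‖(1-t)⁻¹ • v‖^2 = ((1-t)⁻¹)^2 * ‖v‖^2 := by
          rw [norm_smul, Real.norm_eq_abs, mul_pow, sq_abs]
        have h3 : ‖u‖^2 = ((1-t)⁻¹)^2 * (1 - t^2) := by rw [← h1, h2, hvnorm]
        rw [h3]; field_simp; ring
      refine ⟨u, ?_, ?_⟩
      · rw [Metric.mem_closedBall, dist_zero_right]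
        have h4 : ‖u‖^2 ≤ 1 := by rw [hun, div_le_one h1t]; linarith
        nlinarith [norm_nonneg u]
      · show (‖u‖^2+1)⁻¹ • ((2:ℝ) • φ u + (‖u‖^2 - 1) • N) = x
        rw [hu, hun]
        have e1 : ((1+t)/(1-t) + 1)⁻¹ = (1-t)/2 := by
          rw [div_add_one (ne_of_gt h1t), show (1+t) + (1-t) = 2 by ring, inv_div]
        have e2 : (1+t)/(1-t) - 1 = 2*t/(1-t) := by
          field_simp; ring
        rw [e1, e2, smul_add, smul_smul, smul_smul, smul_smul]
        have c1 : (1-t)/2 * 2 * (1-t)⁻¹ = 1 := by field_simp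
        have c2 : (1-t)/2 * (2*t/(1-t)) = t := by field_simp
        rw [c1, c2, one_smul, hvdef]
        abel
    · right
      push_neg at ht
      have h1t : 0 < 1 + t := by linarith
      obtain ⟨u, hu⟩ := hφs ((1 + t)⁻¹ • v)
        (by rw [real_inner_smul_right, hvN]; ring)
      have hun : ‖u‖^2 = (1-t)/(1+t) := by
        have h1 : ‖φ u‖ = ‖u‖ := φ.norm_map u
        rw [hu] at h1
        have h2 : ‖(1+t)⁻¹ • v‖^2 = ((1+t)⁻¹)^2 * ‖v‖^2 := by
          rw [norm_smul, Real.norm_eq_abs, mul_pow, sq_abs]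
        have h3 : ‖u‖^2 = ((1+t)⁻¹)^2 * (1 - t^2) := by rw [← h1, h2, hvnorm]
        rw [h3]; field_simp; ring
      refine ⟨u, ?_, ?_⟩
      · rw [Metric.mem_closedBall, dist_zero_right]
        have h4 : ‖u‖^2 ≤ 1 := by rw [hun, div_le_one h1t]; linarith
        nlinarith [norm_nonneg u]
      · show (‖u‖^2+1)⁻¹ • ((2:ℝ) • φ u - (‖u‖^2 - 1) • N) = x
        rw [hu, hun]
        have e1 : ((1-t)/(1+t) + 1)⁻¹ = (1+t)/2 := by
          rw [div_add_one (ne_of_gt h1t), show (1-t) + (1+t) = 2 by ring, inv_div]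
        have e2 : (1-t)/(1+t) - 1 = -(2*t)/(1+t) := by
          field_simp; ring
        rw [e1, e2, smul_sub, smul_smul, smul_smul, smul_smul]
        have c1 : (1+t)/2 * 2 * (1+t)⁻¹ = 1 := by field_simp
        have c2 : (1+t)/2 * (-(2*t)/(1+t)) = -t := by field_simp
        rw [c1, c2, one_smul, neg_smul, sub_neg_eq_add, hvdef]
        abel
  -- smoothness
  have hns : ContDiff ℝ 1 (fun u : EuclideanSpace ℝ (Fin d) => ‖u‖^2) :=
    contDiff_norm_sq ℝ
  have hφc : ContDiff ℝ 1 (fun u => φ u) := by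
    have h := φ.toContinuousLinearMap.contDiff (n := 1)
    simpa using h
  have hden : ContDiff ℝ 1 (fun u : EuclideanSpace ℝ (Fin d) => (‖u‖^2+1)⁻¹) :=
    (hns.add contDiff_const).inv (fun u => by positivity)
  have hFc : ContDiff ℝ 1 F := by
    rw [hFdef]
    exact hden.smul (((contDiff_const (c := (2:ℝ))).smul hφc).add ((hns.sub (contDiff_const (c := (1:ℝ)))).smul (contDiff_const (c := N))))
  have hGc : ContDiff ℝ 1 G := by
    rw [hGdef]
    exact hden.smul (((contDiff_const (c := (2:ℝ))).smul hφc).sub ((hns.sub (contDiff_const (c := (1:ℝ)))).smul (contDiff_const (c := N))))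
  -- each image has finite measure
  have key : ∀ H : EuclideanSpace ℝ (Fin d) → Esp d, ContDiff ℝ 1 H →
      μH[(d:ℝ)] (H '' Metric.closedBall 0 1) < ⊤ := by
    intro H hH
    obtain ⟨C, hC⟩ := (isCompact_closedBall (0:EuclideanSpace ℝ (Fin d)) 1).exists_bound_of_continuousOn
      ((hH.continuous_fderiv one_ne_zero).continuousOn)
    have hlip : LipschitzOnWith C.toNNReal H (Metric.closedBall 0 1) := by
      apply Convex.lipschitzOnWith_of_nnnorm_fderiv_le
        (fun x _ => (hH.differentiable one_ne_zero).differentiableAt)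
        (fun x hx => ?_) (convex_closedBall 0 1)
      rw [← norm_toNNReal]
      exact Real.toNNReal_mono (hC x hx)
    calc μH[(d:ℝ)] (H '' Metric.closedBall 0 1)
        ≤ (C.toNNReal : ℝ≥0∞)^(d:ℝ) * μH[(d:ℝ)] (Metric.closedBall 0 1) :=
          hlip.hausdorffMeasure_image_le hd0
      _ < ⊤ := ENNReal.mul_lt_top
          (ENNReal.rpow_lt_top_of_nonneg hd0 ENNReal.coe_ne_top)
          (hausdorff_closedBall_lt_top d)
  calc μH[(d:ℝ)] (usphere d)
      ≤ μH[(d:ℝ)] (F '' Metric.closedBall 0 1 ∪ G '' Metric.closedBall 0 1) :=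
        measure_mono hcover
    _ ≤ μH[(d:ℝ)] (F '' Metric.closedBall 0 1) + μH[(d:ℝ)] (G '' Metric.closedBall 0 1) :=
        measure_union_le _ _
    _ < ⊤ := ENNReal.add_lt_top.mpr ⟨key F hFc, key G hGc⟩

end AuxiliaryLemmas

set_option maxHeartbeats 2000000

/-- The fooling function `f_ρ(x) = Φ(g_ρ(y₀·x))` has integral at least `c_d ρ^d`. -/
theorem fooling_function_integral_lower_bound (d : ℕ) (hd : 1 ≤ d) :
    ∃ c > (0 : ℝ), ∀ y₀ ∈ usphere d, ∀ ρ : ℝ, 0 < ρ → ρ ≤ π / 2 →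
      c * ρ ^ d ≤ ∫ x, bump (gAff ρ ⟪y₀, x⟫) ∂(sigmaSph d) := by
  have hπ : 0 < π := Real.pi_pos
  have hdpos : (0:ℝ) < Real.sqrt d :=
    Real.sqrt_pos.mpr (by exact_mod_cast Nat.lt_of_lt_of_le Nat.zero_lt_one hd)
  have hMfin : μH[(d:ℝ)] (usphere d) < ⊤ := sphere_hausdorff_lt_top d hd
  have hMpos : 0 < μH[(d:ℝ)] (usphere d) := by
    have hN : ‖(EuclideanSpace.single (0 : Fin (d+1)) (1:ℝ))‖ = 1 := by
      rw [EuclideanSpace.norm_single, norm_one]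
    have hlt : Real.sqrt (1 - (1/2:ℝ)^2) < Real.sqrt (1 - (0:ℝ)^2) := by
      apply Real.sqrt_lt_sqrt <;> norm_num
    have h := band_measure_lb d hd _ hN (a := 0) (b := 1/2) le_rfl (by norm_num)
      (by norm_num) hlt
    have hpos : 0 < ENNReal.ofReal
        (((Real.sqrt (1 - (0:ℝ)^2) - Real.sqrt (1 - (1/2:ℝ)^2)) / Real.sqrt d) ^ d) := by
      apply ENNReal.ofReal_pos.mpr
      apply pow_pos
      apply div_pos _ hdpos
      have h1 : Real.sqrt (1 - (0:ℝ)^2) = 1 := by norm_num [Real.sqrt_one]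
      linarith [h1 ▸ hlt]
    exact lt_of_lt_of_le hpos (h.trans (measure_mono Set.inter_subset_right))
  have hMtR : 0 < (μH[(d:ℝ)] (usphere d)).toReal :=
    ENNReal.toReal_pos hMpos.ne' hMfin.ne
  refine ⟨Real.exp (-(1/3)) * (3/(16*π^2) / Real.sqrt d)^d *
    (μH[(d:ℝ)] (usphere d)).toReal⁻¹, ?_, ?_⟩
  · apply mul_pos (mul_pos (Real.exp_pos _) (pow_pos (by positivity) d))
    exact inv_pos.mpr hMtR
  intro y₀ hy₀ ρ hρ0 hρπ
  have hy : ‖y₀‖ = 1 := mem_sphere_zero_iff_norm.mp hy₀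
  -- the band
  have hcρ0 : 0 ≤ Real.cos ρ := Real.cos_nonneg_of_mem_Icc ⟨by linarith, hρπ⟩
  have hch1 : Real.cos (ρ/2) ≤ 1 := Real.cos_le_one _
  have hcρ1 : Real.cos ρ ≤ 1 := Real.cos_le_one _
  have hcc : Real.cos ρ ≤ Real.cos (ρ/2) :=
    Real.cos_le_cos_of_nonneg_of_le_pi (by linarith) (by linarith) (by linarith)
  have hΔpos : 0 < Real.cos (ρ/2) - Real.cos ρ := by
    have := Real.cos_lt_cos_of_nonneg_of_le_pi (by linarith : (0:ℝ) ≤ ρ/2)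
      (by linarith) (by linarith : ρ/2 < ρ)
    linarith
  have hwidth := band_width hρ0 hρπ
  set a := (3*Real.cos ρ + Real.cos (ρ/2))/4 with hadef
  set b := (Real.cos ρ + 3*Real.cos (ρ/2))/4 with hbdef
  have ha : 0 ≤ a := by rw [hadef]; linarith
  have hab : a ≤ b := by rw [hadef, hbdef]; linarith
  have hb1 : b ≤ 1 := by rw [hbdef]; linarith
  have hκρ0 : 0 < 3/(16*π^2) * ρ := by positivity
  have hlt : Real.sqrt (1 - b^2) < Real.sqrt (1 - a^2) := by linarith
  have h1 := band_measure_lb d hd y₀ hy ha hab hb1 hlt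
  set Band : Set (Esp d) := {x : Esp d | a ≤ ⟪y₀, x⟫ ∧ ⟪y₀, x⟫ ≤ b} with hBandDef
  have hin : Continuous fun x : Esp d => ⟪y₀, x⟫ :=
    Continuous.inner continuous_const continuous_id
  have hBandMeas : MeasurableSet Band := by
    have hBeq : Band = (fun x : Esp d => ⟪y₀, x⟫) ⁻¹' (Set.Icc a b) := by
      ext x; simp [hBandDef, Set.mem_Icc]
    rw [hBeq]
    exact hin.measurable measurableSet_Icc
  -- the measure is a probability measure
  haveI : IsFiniteMeasure (sigmaSph d) := by
    constructor
    rw [sigmaSph, Measure.smul_apply, Measure.restrict_apply MeasurableSet.univ,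
      Set.univ_inter, smul_eq_mul, ENNReal.inv_mul_cancel hMpos.ne' hMfin.ne]
    exact ENNReal.one_lt_top
  -- the integrand
  have hgc : Continuous fun x : Esp d => gAff ρ ⟪y₀, x⟫ := by
    unfold gAff
    exact ((continuous_const.mul hin).sub continuous_const).div_const _
  have hfint : Integrable (fun x : Esp d => bump (gAff ρ ⟪y₀, x⟫)) (sigmaSph d) := by
    refine ⟨(measurable_bump.comp hgc.measurable).aestronglyMeasurable, ?_⟩
    apply HasFiniteIntegral.of_bounded (C := 1)
    apply ae_of_all
    intro x
    rw [Real.norm_eq_abs, abs_of_nonneg (bump_nonneg _)]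
    exact bump_le_one _
  -- pointwise lower bound on the band
  have hlow : ∀ x ∈ Band, Real.exp (-(1/3)) ≤ bump (gAff ρ ⟪y₀, x⟫) := by
    intro x hx
    obtain ⟨hx1, hx2⟩ := hx
    apply bump_ge
    rw [gAff, abs_div, abs_of_pos hΔpos, div_le_iff₀ hΔpos, abs_le]
    constructor
    · rw [hadef] at hx1; linarith
    · rw [hbdef] at hx2; linarith
  -- integral bounds
  have hA_ne_top : sigmaSph d Band ≠ ⊤ := measure_ne_top _ _
  have step1 : Real.exp (-(1/3)) * (sigmaSph d Band).toReal
      ≤ ∫ x in Band, bump (gAff ρ ⟪y₀, x⟫) ∂(sigmaSph d) :=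
    setIntegral_ge_of_const_le_real hBandMeas hA_ne_top hlow hfint.integrableOn
  have step2 : ∫ x in Band, bump (gAff ρ ⟪y₀, x⟫) ∂(sigmaSph d)
      ≤ ∫ x, bump (gAff ρ ⟪y₀, x⟫) ∂(sigmaSph d) :=
    setIntegral_le_integral hfint (ae_of_all _ fun x => bump_nonneg _)
  -- measure of the band
  have hσBand : sigmaSph d Band
      = (μH[(d:ℝ)] (usphere d))⁻¹ * μH[(d:ℝ)] (Band ∩ usphere d) := by
    rw [sigmaSph, Measure.smul_apply, Measure.restrict_apply hBandMeas, smul_eq_mul]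
  have hκρ : (3/(16*π^2)/Real.sqrt d * ρ)^d
      ≤ ((Real.sqrt (1 - a^2) - Real.sqrt (1 - b^2))/Real.sqrt d)^d := by
    apply pow_le_pow_left₀ (by positivity)
    rw [div_mul_eq_mul_div]
    exact (div_le_div_iff_of_pos_right hdpos).mpr (by linarith)
  have hfinal1 : ENNReal.ofReal ((3/(16*π^2)/Real.sqrt d * ρ)^d)
      ≤ μH[(d:ℝ)] (Band ∩ usphere d) :=
    le_trans (ENNReal.ofReal_le_ofReal hκρ) h1
  have htoReal : (3/(16*π^2)/Real.sqrt d)^d * (μH[(d:ℝ)] (usphere d)).toReal⁻¹ * ρ^d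
      ≤ (sigmaSph d Band).toReal := by
    have h2' : (μH[(d:ℝ)] (usphere d))⁻¹ * ENNReal.ofReal ((3/(16*π^2)/Real.sqrt d * ρ)^d)
        ≤ sigmaSph d Band := by
      rw [hσBand]; exact mul_le_mul_right hfinal1 _
    have h3' := ENNReal.toReal_mono hA_ne_top h2'
    rw [ENNReal.toReal_mul, ENNReal.toReal_inv, ENNReal.toReal_ofReal (by positivity)] at h3'
    calc (3/(16*π^2)/Real.sqrt d)^d * (μH[(d:ℝ)] (usphere d)).toReal⁻¹ * ρ^d
        = (μH[(d:ℝ)] (usphere d)).toReal⁻¹ * ((3/(16*π^2)/Real.sqrt d * ρ)^d) := by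
          rw [mul_pow]; ring
      _ ≤ _ := h3'
  calc Real.exp (-(1/3)) * (3/(16*π^2) / Real.sqrt d)^d *
        (μH[(d:ℝ)] (usphere d)).toReal⁻¹ * ρ^d
      = Real.exp (-(1/3)) * ((3/(16*π^2)/Real.sqrt d)^d *
        (μH[(d:ℝ)] (usphere d)).toReal⁻¹ * ρ^d) := by ring
    _ ≤ Real.exp (-(1/3)) * (sigmaSph d Band).toReal :=
        mul_le_mul_of_nonneg_left htoReal (Real.exp_pos _).le
    _ ≤ ∫ x in Band, bump (gAff ρ ⟪y₀, x⟫) ∂(sigmaSph d) := step1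
    _ ≤ ∫ x, bump (gAff ρ ⟪y₀, x⟫) ∂(sigmaSph d) := step2

end
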